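/- Let D be a regular category and C a full subcategory of D closed in D under finite limits and under quotients. If D is a Goursat category, then C is a Goursat category. -/

import Mathlib

/-! Basic notions: regular categories, internal relations, relational composition,
equivalence relations, Goursat categories. -/

open CategoryTheory CategoryTheory.Limits

universe v u v₂ u₂

namespace Goursat

/-- `f` is a regular epimorphism (Prop-valued version of `RegularEpi`). -/
def IsRegEpi {C : Type u} [Category.{v} C] {X Y : C} (f : X ⟶ Y) : Prop :=
  Nonempty (RegularEpi f)

/-- A (regular) *regular category*: finitely complete (assumed via `HasFiniteLimits`),
kernel pairs have coequalisers, and regular epimorphisms are stable under pullback. -/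
class IsRegular (C : Type u) [Category.{v} C] [HasFiniteLimits C] : Prop where
  /-- kernel pairs have coequalisers -/
  hasCoeqOfKernelPair :
    ∀ {X Y : C} (f : X ⟶ Y), HasCoequalizer (pullback.fst f f) (pullback.snd f f)
  /-- regular epimorphisms are stable under pullback -/
  regEpiStable :
    ∀ {P X Y Z : C} (p₁ : P ⟶ X) (p₂ : P ⟶ Y) (f : X ⟶ Z) (g : Y ⟶ Z),
      IsPullback p₁ p₂ f g → IsRegEpi g → IsRegEpi p₁

section Relations

variable {C : Type u} [Category.{v} C] [HasFiniteLimits C]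

/-- An internal relation from `X` to `Y`: a subobject of `X × Y`. -/
structure Rel (C : Type u) [Category.{v} C] [HasFiniteLimits C] (X Y : C) :
    Type (max u v) where
  obj : C
  p : obj ⟶ X
  q : obj ⟶ Y
  mono : Mono (prod.lift p q)

/-- The opposite relation. -/
def Rel.op {X Y : C} (R : Rel C X Y) : Rel C Y X where
  obj := R.obj
  p := R.q
  q := R.p
  mono := by
    haveI := R.mono
    have h : prod.lift R.q R.p = prod.lift R.p R.q ≫ (prod.braiding X Y).hom := by
      apply Limits.prod.hom_ext <;> simp <;> (repeat erw [prod.lift_fst]) <;> (repeat erw [prod.lift_snd])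
    rw [h]
    exact mono_comp _ _

/-- A morphism `f : X ⟶ Y` seen as the relation `⟨1_X, f⟩ : X ↣ X × Y`. -/
def Rel.ofHom {X Y : C} (f : X ⟶ Y) : Rel C X Y where
  obj := X
  p := 𝟙 X
  q := f
  mono := by
    haveI : Mono (prod.lift (𝟙 X) f ≫ prod.fst) := by
      rw [prod.lift_fst]; infer_instance
    exact mono_of_mono _ prod.fst

/-- Equality of relations (as subobjects). -/
def Rel.equiv {X Y : C} (T U : Rel C X Y) : Prop :=
  ∃ i : T.obj ≅ U.obj, i.hom ≫ U.p = T.p ∧ i.hom ≫ U.q = T.q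

/-- The subobject order on relations. -/
def Rel.le {X Y : C} (T U : Rel C X Y) : Prop :=
  ∃ m : T.obj ⟶ U.obj, m ≫ U.p = T.p ∧ m ≫ U.q = T.q

/-- `T` is the relational composite `S ∘ R` (first `R`, then `S`); it is the
(regular epi, mono) image of `(r₁ ∘ pr₁, s₂ ∘ pr₂) : R ×_Y S ⟶ X × Z`. -/
def IsComp {X Y Z : C} (R : Rel C X Y) (S : Rel C Y Z) (T : Rel C X Z) : Prop :=
  ∃ e : pullback R.q S.p ⟶ T.obj,
    IsRegEpi e ∧ e ≫ T.p = pullback.fst R.q S.p ≫ R.p ∧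
      e ≫ T.q = pullback.snd R.q S.p ≫ S.q

/-- An internal equivalence relation on `X` (with chosen - necessarily unique -
reflexivity, symmetry and transitivity witnesses). -/
structure EqRel (C : Type u) [Category.{v} C] [HasFiniteLimits C] (X : C)
    extends Rel C X X where
  erefl : X ⟶ obj
  erefl_p : erefl ≫ p = 𝟙 X
  erefl_q : erefl ≫ q = 𝟙 X
  esymm : obj ⟶ obj
  esymm_p : esymm ≫ p = q
  esymm_q : esymm ≫ q = p
  etrans : pullback q p ⟶ obj
  etrans_p : etrans ≫ p = pullback.fst q p ≫ p
  etrans_q : etrans ≫ q = pullback.snd q p ≫ q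

/-- The kernel pair of `f`, as a relation on `X`. -/
noncomputable def kernelPairRel {X Y : C} (f : X ⟶ Y) : Rel C X X where
  obj := pullback f f
  p := pullback.fst f f
  q := pullback.snd f f
  mono := ⟨fun {Z} u v h => by
    apply pullback.hom_ext
    · have h1 := h =≫ prod.fst
      simp only [Category.assoc] at h1
      erw [prod.lift_fst] at h1
      exact h1
    · have h1 := h =≫ prod.snd
      simp only [Category.assoc] at h1
      erw [prod.lift_snd] at h1
      exact h1⟩

/-- A monomorphism `i : I ↣ Y`, seen as the relation `(i, i)` on `Y`. -/
def monoPairRel {I Y : C} (i : I ⟶ Y) (hi : Mono i) : Rel C Y Y where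
  obj := I
  p := i
  q := i
  mono := by
    haveI : Mono (prod.lift i i ≫ prod.fst) := by rw [prod.lift_fst]; exact hi
    exact mono_of_mono _ prod.fst

/-- The regular image `f(R)` of a relation `R` on `X` along a regular epimorphism
`f : X ↠ Y`: `R'` is the image of `(f × f) ∘ ⟨r₁, r₂⟩`. -/
def IsRegularImage {X Y : C} (f : X ⟶ Y) (R : Rel C X X) (R' : Rel C Y Y) : Prop :=
  ∃ ψ : R.obj ⟶ R'.obj, IsRegEpi ψ ∧ ψ ≫ R'.p = R.p ≫ f ∧ ψ ≫ R'.q = R.q ≫ f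

end Relations

/-- A *Goursat category*: a regular category in which `RSR = SRS` for all pairs of
equivalence relations `R`, `S` on the same object. -/
class IsGoursat (C : Type u) [Category.{v} C] [HasFiniteLimits C]
    extends IsRegular C : Prop where
  goursat :
    ∀ {X : C} (R S : EqRel C X) (SR RSR RS SRS : Rel C X X),
      IsComp R.toRel S.toRel SR → IsComp SR R.toRel RSR →
      IsComp S.toRel R.toRel RS → IsComp RS S.toRel SRS →
      RSR.equiv SRS

/-- `D` is a regular category (packaged as a mere property). -/
def RegularCat (D : Type u₂) [Category.{v₂} D] : Prop :=
  ∃ h : HasFiniteLimits D, @IsRegular D _ h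

/-- `D` is a Goursat category (packaged as a mere property). -/
def GoursatCat (D : Type u₂) [Category.{v₂} D] : Prop :=
  ∃ h : HasFiniteLimits D, @IsGoursat D _ h

end Goursat

namespace Goursat

section RegEpiIso

variable {E : Type u₂} [Category.{v₂} E]

theorem isRegEpi_of_iso_comp {X X' Y Y' : E} (f : X ⟶ Y) (hf : IsRegEpi f)
    (u : X' ≅ X) (w : Y ≅ Y') {f' : X' ⟶ Y'} (hcomm : u.hom ≫ f ≫ w.hom = f') :
    IsRegEpi f' := by
  obtain ⟨r⟩ := hf
  haveI := RegularEpi.epi f r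
  refine ⟨⟨r.W, r.left ≫ u.inv, r.right ≫ u.inv, ?_, ?_⟩⟩
  · rw [← hcomm]
    simp only [Category.assoc, Iso.inv_hom_id_assoc]
    rw [reassoc_of% r.w]
  · refine Cofork.IsColimit.mk' _ (fun s => ?_)
    obtain ⟨d, hd⟩ := Cofork.IsColimit.desc' r.isColimit (u.inv ≫ s.π)
      (by simpa using s.condition)
    have hd' : f ≫ d = u.inv ≫ s.π := by simpa using hd
    have fac : f' ≫ (w.inv ≫ d) = s.π := by
      rw [← hcomm]
      simp [hd']
    refine ⟨w.inv ≫ d, ?_, ?_⟩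
    · simpa using fac
    · intro m hm
      have hm' : f' ≫ m = s.π := by simpa using hm
      haveI : Epi f' := by
        rw [← hcomm]; infer_instance
      rw [← cancel_epi f', hm', fac]

end RegEpiIso

section Main

variable {D : Type u} [Category.{v} D] [HasFiniteLimits D] {P : D → Prop}

/-- Closure of `P` under finite limits. -/
abbrev HLim (P : D → Prop) : Prop :=
  ∀ (J : Type) [SmallCategory J] [FinCategory J] (F : J ⥤ D),
    (∀ j, P (F.obj j)) → ∀ c : Cone F, IsLimit c → P c.pt

/-- Closure of `P` under quotients. -/
abbrev HQuot (P : D → Prop) : Prop :=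
  ∀ {A B : D} (f : A ⟶ B), IsRegEpi f → P A → P B

theorem closed_shape (hlim : HLim P) (J : Type) [SmallCategory J] [FinCategory J] :
    ObjectProperty.IsClosedUnderLimitsOfShape P J :=
  ⟨fun _ ⟨h⟩ => hlim J _ h.prop_diag_obj _ h.isLimit⟩

theorem hasFL (hlim : HLim P) : HasFiniteLimits (ObjectProperty.FullSubcategory P) :=
  ⟨fun J _ _ => by haveI := closed_shape hlim J; exact hasLimitsOfShape_of_closedUnderLimits J P⟩

theorem mem_pullback (hlim : HLim P) {X Y Z : D} (f : X ⟶ Z) (g : Y ⟶ Z)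
    (hX : P X) (hY : P Y) (hZ : P Z) : P (pullback f g) := by
  haveI := closed_shape hlim WalkingCospan
  refine ObjectProperty.prop_of_isLimit (P := P) (limit.isLimit (cospan f g)) ?_
  rintro (_ | _ | _) <;> assumption

/-- Transfer of regular epimorphisms across the inclusion. -/
theorem isRegEpi_map_iff [IsRegular D] (hlim : HLim P) (hquot : HQuot P)
    {A B : ObjectProperty.FullSubcategory P} (f : A ⟶ B) :
    IsRegEpi ((ObjectProperty.ι P).map f) ↔ IsRegEpi f := by
  set g : A.obj ⟶ B.obj := (ObjectProperty.ι P).map f with hgdef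
  have hK : P (pullback g g) := mem_pullback hlim g g A.property A.property B.property
  let K : ObjectProperty.FullSubcategory P := ⟨pullback g g, hK⟩
  let a : K ⟶ A := ObjectProperty.homMk (pullback.fst g g)
  let b : K ⟶ A := ObjectProperty.homMk (pullback.snd g g)
  have hk : IsKernelPair g (pullback.fst g g) (pullback.snd g g) :=
    IsPullback.of_hasPullback g g
  have hk' : IsKernelPair f a b :=
    IsPullback.of_isLimit (PullbackCone.IsLimit.mk
      (show a ≫ f = b ≫ f by ext; exact hk.w)
      (fun s => ObjectProperty.homMk (pullback.lift s.fst.hom s.snd.hom (congrArg (·.hom) s.condition) : s.pt.obj ⟶ pullback g g))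
      (fun s => by ext; exact pullback.lift_fst _ _ _)
      (fun s => by ext; exact pullback.lift_snd _ _ _)
      (fun s m hm₁ hm₂ => by
        ext
        · simp only [ObjectProperty.homMk_hom, pullback.lift_fst]; exact congrArg (·.hom) hm₁
        · simp only [ObjectProperty.homMk_hom, pullback.lift_snd]; exact congrArg (·.hom) hm₂))
  haveI : HasCoequalizer (pullback.fst g g) (pullback.snd g g) :=
    IsRegular.hasCoeqOfKernelPair g
  constructor
  · rintro ⟨r⟩
    haveI := RegularEpi.epi g r
    have hD : IsColimit (Cofork.ofπ g hk.w) := hk.toCoequalizer r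
    refine ⟨{ W := K, left := a, right := b, w := hk'.w, isColimit := ?_ }⟩
    refine Cofork.IsColimit.mk' _ (fun s => ?_)
    have hcond : pullback.fst g g ≫ s.π.hom
        = pullback.snd g g ≫ s.π.hom := congrArg (·.hom) s.condition
    obtain ⟨d, hd⟩ := Cofork.IsColimit.desc' hD s.π.hom hcond
    have hd' : g ≫ d = s.π.hom := by simpa using hd
    refine ⟨(ObjectProperty.homMk d : B ⟶ s.pt), by ext; exact hd', ?_⟩
    intro m hm
    have hm' : g ≫ m.hom = s.π.hom := congrArg (·.hom) hm
    ext
    exact (cancel_epi g).1 (hm'.trans hd'.symm)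
  · rintro ⟨r⟩
    haveI := RegularEpi.epi f r
    have hC : IsColimit (Cofork.ofπ f hk'.w) := hk'.toCoequalizer r
    set q := coequalizer.π (pullback.fst g g) (pullback.snd g g) with hqdef
    have hQ : P (coequalizer (pullback.fst g g) (pullback.snd g g)) :=
      hquot q ⟨coequalizerRegular _ _⟩ A.property
    let Q : ObjectProperty.FullSubcategory P := ⟨_, hQ⟩
    let q' : A ⟶ Q := ObjectProperty.homMk q
    have hcond : a ≫ q' = b ≫ q' := by ext; exact coequalizer.condition (pullback.fst g g) (pullback.snd g g)
    obtain ⟨n, hn⟩ := Cofork.IsColimit.desc' hC q' hcond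
    have hn' : f ≫ n = q' := by simpa using hn
    let m : Q ⟶ B := ObjectProperty.homMk (coequalizer.desc g hk.w)
    have hmC : q' ≫ m = f := by ext; exact coequalizer.π_desc _ _
    have hq'epi : Epi q' := ⟨fun u v h => by ext; exact congrArg (·.hom) h⟩
    have h1 : m ≫ n = 𝟙 Q := by
      rw [← cancel_epi q', ← Category.assoc, hmC, hn', Category.comp_id]
    have h2 : n ≫ m = 𝟙 B := by
      rw [← cancel_epi f, ← Category.assoc, hn', hmC, Category.comp_id]
    refine isRegEpi_of_iso_comp q ⟨coequalizerRegular _ _⟩ (Iso.refl _)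
      (⟨m.hom, n.hom, congrArg (·.hom) h1, congrArg (·.hom) h2⟩ : coequalizer (pullback.fst g g) (pullback.snd g g) ≅ B.obj) ?_
    simp only [Iso.refl_hom, Category.id_comp]
    exact congrArg (·.hom) hmC

section GoursatSec

variable [HasFiniteLimits (ObjectProperty.FullSubcategory P)]

/-- `IsRegular` for the full subcategory. -/
theorem isRegularC [IsRegular D] (hlim : HLim P) (hquot : HQuot P) :
    IsRegular (ObjectProperty.FullSubcategory P) := by
  letI : CreatesLimitsOfShape WalkingCospan (ObjectProperty.ι P) :=
    @createsLimitsOfShapeFullSubcategoryInclusion _ _ _ _ P (closed_shape hlim _) _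
  constructor
  · intro X Y f
    haveI : HasCoequalizer (pullback.fst ((ObjectProperty.ι P).map f) ((ObjectProperty.ι P).map f))
        (pullback.snd ((ObjectProperty.ι P).map f) ((ObjectProperty.ι P).map f)) :=
      IsRegular.hasCoeqOfKernelPair ((ObjectProperty.ι P).map f)
    have hQ : P (coequalizer (pullback.fst ((ObjectProperty.ι P).map f) ((ObjectProperty.ι P).map f))
        (pullback.snd ((ObjectProperty.ι P).map f) ((ObjectProperty.ι P).map f))) :=
      hquot (coequalizer.π _ _) ⟨coequalizerRegular _ _⟩ X.property
    let Q : ObjectProperty.FullSubcategory P := ⟨_, hQ⟩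
    let q' : X ⟶ Q := ObjectProperty.homMk (coequalizer.π _ _)
    have he1 : (PreservesPullback.iso (ObjectProperty.ι P) f f).hom ≫ pullback.fst ((ObjectProperty.ι P).map f) ((ObjectProperty.ι P).map f)
        = (ObjectProperty.ι P).map (pullback.fst f f) := PreservesPullback.iso_hom_fst (ObjectProperty.ι P) f f
    have he2 : (PreservesPullback.iso (ObjectProperty.ι P) f f).hom ≫ pullback.snd ((ObjectProperty.ι P).map f) ((ObjectProperty.ι P).map f)
        = (ObjectProperty.ι P).map (pullback.snd f f) := PreservesPullback.iso_hom_snd (ObjectProperty.ι P) f f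
    have hcond : pullback.fst f f ≫ q' = pullback.snd f f ≫ q' := by
      ext
      show (ObjectProperty.ι P).map (pullback.fst f f) ≫ coequalizer.π _ _
        = (ObjectProperty.ι P).map (pullback.snd f f) ≫ coequalizer.π _ _
      rw [← he1, ← he2, Category.assoc, Category.assoc, coequalizer.condition]
    refine HasColimit.mk ⟨Cofork.ofπ q' hcond, Cofork.IsColimit.mk' _ (fun s => ?_)⟩
    have hsC : (ObjectProperty.ι P).map (pullback.fst f f) ≫ s.π.hom
        = (ObjectProperty.ι P).map (pullback.snd f f) ≫ s.π.hom := congrArg (·.hom) s.condition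
    have hscond : pullback.fst ((ObjectProperty.ι P).map f) ((ObjectProperty.ι P).map f) ≫ s.π.hom
        = pullback.snd ((ObjectProperty.ι P).map f) ((ObjectProperty.ι P).map f) ≫ s.π.hom := by
      rw [← cancel_epi (PreservesPullback.iso (ObjectProperty.ι P) f f).hom]
      simp only [← Category.assoc]
      rw [he1, he2]
      exact hsC
    let d : Q ⟶ s.pt := ObjectProperty.homMk (coequalizer.desc s.π.hom hscond)
    have hd : q' ≫ d = s.π := by ext; exact coequalizer.π_desc _ _
    refine ⟨d, by simpa using hd, fun {m} hm => ?_⟩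
    have hm' : coequalizer.π _ _ ≫ m.hom = s.π.hom := congrArg (·.hom) hm
    ext
    exact (cancel_epi (coequalizer.π (pullback.fst ((ObjectProperty.ι P).map f) ((ObjectProperty.ι P).map f))
      (pullback.snd ((ObjectProperty.ι P).map f) ((ObjectProperty.ι P).map f)))).1 (hm'.trans (congrArg (·.hom) hd).symm)
  · intro Pb X Y Z p₁ p₂ f g hpb hg
    have hpbD := hpb.map (ObjectProperty.ι P)
    exact (isRegEpi_map_iff hlim hquot p₁).1
      (IsRegular.regEpiStable _ _ _ _ hpbD ((isRegEpi_map_iff hlim hquot g).2 hg))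

theorem mono_lift_map (hlim : HLim P) {X : ObjectProperty.FullSubcategory P}
    (R : Rel (ObjectProperty.FullSubcategory P) X X) :
    Mono (prod.lift ((ObjectProperty.ι P).map R.p) ((ObjectProperty.ι P).map R.q)) := by
  letI : CreatesLimitsOfShape WalkingCospan (ObjectProperty.ι P) :=
    @createsLimitsOfShapeFullSubcategoryInclusion _ _ _ _ P (closed_shape hlim _) _
  letI : CreatesLimitsOfShape (Discrete WalkingPair) (ObjectProperty.ι P) :=
    @createsLimitsOfShapeFullSubcategoryInclusion _ _ _ _ P (closed_shape hlim _) _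
  haveI := R.mono
  have h1 : IsKernelPair (prod.lift R.p R.q) (𝟙 R.obj) (𝟙 R.obj) :=
    IsKernelPair.id_of_mono _
  have h2 := h1.map (ObjectProperty.ι P)
  rw [CategoryTheory.Functor.map_id] at h2
  have h3 : Mono ((ObjectProperty.ι P).map (prod.lift R.p R.q)) :=
    IsKernelPair.mono_of_isIso_fst h2
  have key : prod.lift ((ObjectProperty.ι P).map R.p) ((ObjectProperty.ι P).map R.q)
      = (ObjectProperty.ι P).map (prod.lift R.p R.q) ≫ prodComparison (ObjectProperty.ι P) X X := by
    apply Limits.prod.hom_ext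
    · rw [Category.assoc, prodComparison_fst, ← CategoryTheory.Functor.map_comp, prod.lift_fst,
        prod.lift_fst]
    · rw [Category.assoc, prodComparison_snd, ← CategoryTheory.Functor.map_comp, prod.lift_snd,
        prod.lift_snd]
  rw [key]
  exact mono_comp _ _

/-- Image of a relation under the inclusion. -/
def mapRel (hlim : HLim P) {X : ObjectProperty.FullSubcategory P}
    (R : Rel (ObjectProperty.FullSubcategory P) X X) : Rel D X.obj X.obj where
  obj := R.obj.obj
  p := (ObjectProperty.ι P).map R.p
  q := (ObjectProperty.ι P).map R.q
  mono := mono_lift_map hlim R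

/-- Image of an equivalence relation under the inclusion. -/
noncomputable def mapEqRel (hlim : HLim P) {X : ObjectProperty.FullSubcategory P}
    (R : EqRel (ObjectProperty.FullSubcategory P) X) : EqRel D X.obj :=
  letI : CreatesLimitsOfShape WalkingCospan (ObjectProperty.ι P) :=
    @createsLimitsOfShapeFullSubcategoryInclusion _ _ _ _ P (closed_shape hlim _) _
  { toRel := mapRel hlim R.toRel
    erefl := (ObjectProperty.ι P).map R.erefl
    erefl_p := by
      show (ObjectProperty.ι P).map R.erefl ≫ (ObjectProperty.ι P).map R.p = 𝟙 X.obj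
      rw [← CategoryTheory.Functor.map_comp, R.erefl_p, CategoryTheory.Functor.map_id]
      rfl
    erefl_q := by
      show (ObjectProperty.ι P).map R.erefl ≫ (ObjectProperty.ι P).map R.q = 𝟙 X.obj
      rw [← CategoryTheory.Functor.map_comp, R.erefl_q, CategoryTheory.Functor.map_id]
      rfl
    esymm := (ObjectProperty.ι P).map R.esymm
    esymm_p := by
      show (ObjectProperty.ι P).map R.esymm ≫ (ObjectProperty.ι P).map R.p = (ObjectProperty.ι P).map R.q
      rw [← CategoryTheory.Functor.map_comp, R.esymm_p]
    esymm_q := by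
      show (ObjectProperty.ι P).map R.esymm ≫ (ObjectProperty.ι P).map R.q = (ObjectProperty.ι P).map R.p
      rw [← CategoryTheory.Functor.map_comp, R.esymm_q]
    etrans := (PreservesPullback.iso (ObjectProperty.ι P) R.q R.p).inv ≫ (ObjectProperty.ι P).map R.etrans
    etrans_p := by
      show ((PreservesPullback.iso (ObjectProperty.ι P) R.q R.p).inv ≫ (ObjectProperty.ι P).map R.etrans) ≫ (ObjectProperty.ι P).map R.p
        = pullback.fst ((ObjectProperty.ι P).map R.q) ((ObjectProperty.ι P).map R.p) ≫ (ObjectProperty.ι P).map R.p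
      rw [Category.assoc, ← CategoryTheory.Functor.map_comp, R.etrans_p, CategoryTheory.Functor.map_comp,
        ← Category.assoc, PreservesPullback.iso_inv_fst]
    etrans_q := by
      show ((PreservesPullback.iso (ObjectProperty.ι P) R.q R.p).inv ≫ (ObjectProperty.ι P).map R.etrans) ≫ (ObjectProperty.ι P).map R.q
        = pullback.snd ((ObjectProperty.ι P).map R.q) ((ObjectProperty.ι P).map R.p) ≫ (ObjectProperty.ι P).map R.q
      rw [Category.assoc, ← CategoryTheory.Functor.map_comp, R.etrans_q, CategoryTheory.Functor.map_comp,
        ← Category.assoc, PreservesPullback.iso_inv_snd] }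

theorem isComp_map [IsRegular D] (hlim : HLim P) (hquot : HQuot P)
    {X : ObjectProperty.FullSubcategory P} {R S T : Rel (ObjectProperty.FullSubcategory P) X X}
    (h : IsComp R S T) :
    IsComp (mapRel hlim R) (mapRel hlim S) (mapRel hlim T) := by
  letI : CreatesLimitsOfShape WalkingCospan (ObjectProperty.ι P) :=
    @createsLimitsOfShapeFullSubcategoryInclusion _ _ _ _ P (closed_shape hlim _) _
  obtain ⟨e, he, h1, h2⟩ := h
  refine ⟨(PreservesPullback.iso (ObjectProperty.ι P) R.q S.p).inv ≫ (ObjectProperty.ι P).map e, ?_, ?_, ?_⟩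
  · exact isRegEpi_of_iso_comp ((ObjectProperty.ι P).map e) ((isRegEpi_map_iff hlim hquot e).2 he)
      (PreservesPullback.iso (ObjectProperty.ι P) R.q S.p).symm (Iso.refl _) (by simp; rfl)
  · show ((PreservesPullback.iso (ObjectProperty.ι P) R.q S.p).inv ≫ (ObjectProperty.ι P).map e) ≫ (ObjectProperty.ι P).map T.p
      = pullback.fst ((ObjectProperty.ι P).map R.q) ((ObjectProperty.ι P).map S.p) ≫ (ObjectProperty.ι P).map R.p
    rw [Category.assoc, ← CategoryTheory.Functor.map_comp, h1, CategoryTheory.Functor.map_comp,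
      ← Category.assoc, PreservesPullback.iso_inv_fst]
  · show ((PreservesPullback.iso (ObjectProperty.ι P) R.q S.p).inv ≫ (ObjectProperty.ι P).map e) ≫ (ObjectProperty.ι P).map T.q
      = pullback.snd ((ObjectProperty.ι P).map R.q) ((ObjectProperty.ι P).map S.p) ≫ (ObjectProperty.ι P).map S.q
    rw [Category.assoc, ← CategoryTheory.Functor.map_comp, h2, CategoryTheory.Functor.map_comp,
      ← Category.assoc, PreservesPullback.iso_inv_snd]

theorem goursatC [IsGoursat D] (hlim : HLim P) (hquot : HQuot P) :
    IsGoursat (ObjectProperty.FullSubcategory P) := by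
  refine { toIsRegular := isRegularC hlim hquot, goursat := ?_ }
  intro X R S SR RSR RS SRS c1 c2 c3 c4
  obtain ⟨i, hp, hq⟩ := IsGoursat.goursat (mapEqRel hlim R) (mapEqRel hlim S)
    (mapRel hlim SR) (mapRel hlim RSR) (mapRel hlim RS) (mapRel hlim SRS)
    (isComp_map hlim hquot c1) (isComp_map hlim hquot c2)
    (isComp_map hlim hquot c3) (isComp_map hlim hquot c4)
  exact ⟨ObjectProperty.isoMk _ i, by ext; exact hp, by ext; exact hq⟩

end GoursatSec

end Main

/-- Let `D` be a regular category and `C` a full subcategory of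
`D` closed under finite limits and under quotients. If `D` is a Goursat category,
then so is `C`. -/
theorem fullSubcategory_goursat
    (D : Type u) [Category.{v} D] [HasFiniteLimits D] [IsGoursat D]
    (P : D → Prop)
    (hlim : ∀ (J : Type) [SmallCategory J] [FinCategory J] (F : J ⥤ D),
      (∀ j, P (F.obj j)) → ∀ c : Cone F, IsLimit c → P c.pt)
    (hquot : ∀ {A B : D} (f : A ⟶ B), IsRegEpi f → P A → P B) :
    GoursatCat (ObjectProperty.FullSubcategory P) := by
  haveI hFL : HasFiniteLimits (ObjectProperty.FullSubcategory P) := hasFL hlim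
  exact ⟨hFL, goursatC hlim hquot⟩

end Goursat
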